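/- arXiv:1908.05988 — 3 statements merged into one kernel-verified Lean document; each statement's English description precedes it below -/
import Mathlib

section
/- Balinski's theorem: the edge graph (1-skeleton graph) of a d-dimensional convex polytope is d-connected, i.e., deleting any d-1 vertices leaves the graph connected. -/
/-- A polyhedron: a finite intersection of affine halfspaces in `ℝ^n`. -/
def IsPolyhedron {n : ℕ} (P : Set (Fin n → ℝ)) : Prop :=
  ∃ s : Finset ((Fin n → ℝ) × ℝ), P = {x | ∀ p ∈ s, ∑ i, p.1 i * x i ≤ p.2}

/-- A rational polyhedron: cut out by finitely many rational affine halfspaces. -/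
def IsRationalPolyhedron {n : ℕ} (P : Set (Fin n → ℝ)) : Prop :=
  ∃ s : Finset ((Fin n → ℚ) × ℚ), P = {x | ∀ p ∈ s, ∑ i, (p.1 i : ℝ) * x i ≤ (p.2 : ℝ)}

/-- Dimension of a subset of `ℝ^n`: the dimension of its affine span. -/
noncomputable def polyDim {n : ℕ} (P : Set (Fin n → ℝ)) : ℕ :=
  Module.finrank ℝ (vectorSpan ℝ P)

/-- A polyhedral complex in `ℝ^n` (faces are nonempty polyhedra, closed under
nonempty pairwise intersection). -/
structure PolyhedralComplex (n : ℕ) where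
  faces : Set (Set (Fin n → ℝ))
  poly : ∀ P ∈ faces, IsPolyhedron P
  nonempty : ∀ P ∈ faces, P.Nonempty
  inter_mem : ∀ P ∈ faces, ∀ Q ∈ faces, (P ∩ Q).Nonempty → P ∩ Q ∈ faces

namespace PolyhedralComplex

variable {n : ℕ}

/-- The support of a polyhedral complex. -/
def support (C : PolyhedralComplex n) : Set (Fin n → ℝ) := ⋃₀ C.faces

/-- The facets: faces of dimension `d`. -/
def facets (C : PolyhedralComplex n) (d : ℕ) : Set (Set (Fin n → ℝ)) :=
  {P | P ∈ C.faces ∧ polyDim P = d}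

/-- The ridges: faces of dimension `d - 1`. -/
def ridges (C : PolyhedralComplex n) (d : ℕ) : Set (Set (Fin n → ℝ)) :=
  {P | P ∈ C.faces ∧ polyDim P = d - 1}

/-- Pure of dimension `d`: every face is contained in a `d`-dimensional face. -/
def IsPure (C : PolyhedralComplex n) (d : ℕ) : Prop :=
  (∀ P ∈ C.faces, polyDim P ≤ d) ∧ ∀ P ∈ C.faces, ∃ Q ∈ C.facets d, P ⊆ Q

def IsRational (C : PolyhedralComplex n) : Prop := ∀ P ∈ C.faces, IsRationalPolyhedron P

/-- Pointed: no face contains an affine line. -/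
def IsPointed (C : PolyhedralComplex n) : Prop :=
  ∀ P ∈ C.faces, ¬ ∃ (x v : Fin n → ℝ), v ≠ 0 ∧ ∀ t : ℝ, x + t • v ∈ P

/-- Adjacency in the facet-ridge hypergraph after deleting the facets in `G`
(and all hyperedges incident to them). -/
def Adj (C : PolyhedralComplex n) (d : ℕ) (G : Finset (Set (Fin n → ℝ)))
    (P Q : Set (Fin n → ℝ)) : Prop :=
  P ∈ C.facets d ∧ Q ∈ C.facets d ∧ P ∉ G ∧ Q ∉ G ∧
    ∃ R ∈ C.ridges d, R ⊆ P ∧ R ⊆ Q ∧ ∀ F ∈ G, ¬ R ⊆ F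

/-- `k`-connectedness through codimension one of a pure `d`-dimensional complex:
deleting any `k - 1` closed facets leaves the facet-ridge hypergraph connected. -/
def ConnectedThroughCodimOne (C : PolyhedralComplex n) (d k : ℕ) : Prop :=
  ∀ G : Finset (Set (Fin n → ℝ)), ↑G ⊆ C.facets d → G.card < k →
    ∀ P ∈ C.facets d, ∀ Q ∈ C.facets d, P ∉ G → Q ∉ G →
      Relation.ReflTransGen (C.Adj d G) P Q

end PolyhedralComplex

/-- A (nonarchimedean, additively written) real-valued valuation on a field. -/
structure TropValuation (K : Type*) [Field K] where
  val : K → ℝ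
  map_one : val 1 = 0
  map_mul : ∀ x y : K, x ≠ 0 → y ≠ 0 → val (x * y) = val x + val y
  map_add : ∀ x y : K, x ≠ 0 → y ≠ 0 → x + y ≠ 0 → min (val x) (val y) ≤ val (x + y)

/-- The zero set in the torus `(K*)^n` of an ideal of polynomials. -/
def torusZeroSet {K : Type*} [Field K] {n : ℕ} (I : Ideal (MvPolynomial (Fin n) K)) :
    Set (Fin n → Kˣ) :=
  {x | ∀ f ∈ I, MvPolynomial.eval (fun i => (x i : K)) f = 0}

/-- Tropicalization: closure of the coordinatewise valuation image. -/
def tropicalize {K : Type*} [Field K] (w : TropValuation K) {n : ℕ}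
    (X : Set (Fin n → Kˣ)) : Set (Fin n → ℝ) :=
  closure {p : Fin n → ℝ | ∃ x ∈ X, ∀ i, p i = w.val ((x i : K))}

/-- `S` is the tropicalization of an irreducible subvariety of the torus `(K*)^n`. -/
def IsTropOfIrred (K : Type*) [Field K] (w : TropValuation K) {n : ℕ}
    (S : Set (Fin n → ℝ)) : Prop :=
  ∃ I : Ideal (MvPolynomial (Fin n) K), I.IsPrime ∧ S = tropicalize w (torusZeroSet I)

/-- The vanishing ideal of a subset of the torus `(K*)^n`. -/
def vanishingIdeal {K : Type*} [Field K] {n : ℕ} (S : Set (Fin n → Kˣ)) :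
    Ideal (MvPolynomial (Fin n) K) where
  carrier := {f | ∀ x ∈ S, MvPolynomial.eval (fun i => (x i : K)) f = 0}
  add_mem' := by
    intro a b ha hb x hx
    simp [map_add, ha x hx, hb x hx]
  zero_mem' := by intro x hx; simp
  smul_mem' := by
    intro c f hf x hx
    simp [smul_eq_mul, map_mul, hf x hx]

/-- The affine hyperplane with normal vector `a` and level `b`. -/
def hplane {n : ℕ} (a : Fin n → ℝ) (b : ℝ) : Set (Fin n → ℝ) := {x | ∑ i, a i * x i = b}

/-- The ray spanned by a vector. -/
def ray {n : ℕ} (u : Fin n → ℝ) : Set (Fin n → ℝ) := {x | ∃ t : ℝ, 0 ≤ t ∧ x = t • u}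

/-- The cone spanned by two vectors. -/
def cone2 {n : ℕ} (u v : Fin n → ℝ) : Set (Fin n → ℝ) :=
  {x | ∃ s t : ℝ, 0 ≤ s ∧ 0 ≤ t ∧ x = s • u + t • v}

def IsIntVec {n : ℕ} (v : Fin n → ℝ) : Prop := ∀ i, ∃ k : ℤ, v i = (k : ℝ)

def IsPrimitiveVec {n : ℕ} (v : Fin n → ℝ) : Prop :=
  IsIntVec v ∧ v ≠ 0 ∧ ∀ (k : ℕ) (w : Fin n → ℝ), IsIntVec w → v = (k : ℝ) • w → k = 1

/-- Primitive integer vector modulo the subspace `W`. -/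
def PrimitiveMod {n : ℕ} (W : Submodule ℝ (Fin n → ℝ)) (v : Fin n → ℝ) : Prop :=
  IsIntVec v ∧ v ∉ W ∧
    ∀ m : ℕ, 2 ≤ m → ∀ w : Fin n → ℝ, IsIntVec w → v - (m : ℝ) • w ∈ W → w ∈ W

/-- `v` points from the ridge `τ` into the facet `σ`. -/
def PointsInto {n : ℕ} (τ σ : Set (Fin n → ℝ)) (v : Fin n → ℝ) : Prop :=
  ∃ x ∈ τ, ∃ δ : ℝ, 0 < δ ∧ ∀ t : ℝ, 0 < t → t ≤ δ → x + t • v ∈ σ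

/-- The tropical balancing condition with weights `m` at every ridge. -/
def PolyhedralComplex.IsBalanced {n : ℕ} (C : PolyhedralComplex n) (d : ℕ)
    (m : Set (Fin n → ℝ) → ℕ) : Prop :=
  (∀ σ ∈ C.facets d, 0 < m σ) ∧
  ∀ τ ∈ C.ridges d, ∃ (S : Finset (Set (Fin n → ℝ))) (v : Set (Fin n → ℝ) → (Fin n → ℝ)),
    (↑S = {σ | σ ∈ C.facets d ∧ τ ⊆ σ}) ∧
    (∀ σ ∈ S, PrimitiveMod (vectorSpan ℝ τ) (v σ) ∧ v σ ∈ vectorSpan ℝ σ ∧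
      PointsInto τ σ (v σ)) ∧
    (∑ σ ∈ S, (m σ : ℝ) • v σ) ∈ vectorSpan ℝ τ

/-- The face of `P` on which the linear functional `w` is maximized. -/
def maxFace {n : ℕ} (P : Set (Fin n → ℝ)) (w : Fin n → ℝ) : Set (Fin n → ℝ) :=
  {x | x ∈ P ∧ ∀ y ∈ P, ∑ i, w i * y i ≤ ∑ i, w i * x i}

/-- The cone of the normal fan of `P` associated to the face maximizing `w`. -/
def normalFanCone {n : ℕ} (P : Set (Fin n → ℝ)) (w : Fin n → ℝ) : Set (Fin n → ℝ) :=
  {u | maxFace P w ⊆ maxFace P u}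

set_option linter.unusedSectionVars false
set_option linter.unusedVariables false
set_option maxHeartbeats 1000000

section BalinskiAux

open Set

variable {E : Type*} [NormedAddCommGroup E] [NormedSpace ℝ E] [FiniteDimensional ℝ E]

theorem bal_not_mem_hull {W : Set E} {v : E}
    (hv : v ∈ (convexHull ℝ W).extremePoints ℝ) : v ∉ convexHull ℝ (W \ {v}) := by
  intro hmem
  have h2 : v ∈ (convexHull ℝ (W \ {v})).extremePoints ℝ :=
    inter_extremePoints_subset_extremePoints_of_subset
      (convexHull_mono diff_subset) ⟨hmem, hv⟩
  exact (extremePoints_convexHull_subset h2).2 rfl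

theorem bal_le_on_hull {W : Set E} {f : E →ₗ[ℝ] ℝ} {c : ℝ} (hW : ∀ w ∈ W, f w ≤ c) :
    ∀ p ∈ convexHull ℝ W, f p ≤ c := fun p hp =>
  convexHull_min hW (convex_halfSpace_le f.isLinear c) hp

theorem bal_improve {W Q : Set E} (hW : W.Finite) (hQ : Q = convexHull ℝ W) {v u0 : E}
    (hv : v ∈ Q.extremePoints ℝ) (f : E →ₗ[ℝ] ℝ) (hu0 : u0 ∈ Q) (hfu0 : f v < f u0) :
    ∃ u ∈ Q.extremePoints ℝ, f v < f u ∧ v ≠ u ∧ IsExtreme ℝ Q (segment ℝ v u) := by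
  subst hQ
  have hvW : v ∈ W := extremePoints_convexHull_subset hv
  have hvQ : v ∈ convexHull ℝ W := hv.1
  set W' : Set E := W \ {v} with hW'def
  rcases W'.eq_empty_or_nonempty with hW'e | hW'ne
  · exfalso
    have hWv : W ⊆ {v} := by
      intro w hw
      rcases eq_or_ne w v with rfl | hne
      · rfl
      · exact absurd (show w ∈ W' from ⟨hw, hne⟩) (by rw [hW'e]; exact notMem_empty w)
    have := convexHull_min (hWv.trans (subset_convexHull ℝ {v})) (convex_convexHull ℝ _) hu0
    rw [convexHull_singleton, mem_singleton_iff] at this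
    rw [this] at hfu0
    exact lt_irrefl _ hfu0
  have hW'fin : W'.Finite := hW.subset diff_subset
  have hW'cl : IsClosed (convexHull ℝ W') := (hW'fin.isCompact_convexHull ℝ).isClosed
  have hvW' : v ∉ convexHull ℝ W' := bal_not_mem_hull hv
  obtain ⟨g, c, hgc, hgv⟩ := geometric_hahn_banach_closed_point
    (convex_convexHull ℝ W') hW'cl hvW'
  have hWins : insert v W' = W := by
    rw [hW'def, Set.insert_diff_singleton, Set.insert_eq_self.2 hvW]
  have hdecomp : ∀ p ∈ convexHull ℝ W, ∃ y ∈ convexHull ℝ W', p ∈ segment ℝ v y := by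
    intro p hp
    rw [← hWins, convexHull_insert hW'ne, mem_convexJoin] at hp
    obtain ⟨a, ha, b2, hb2, hseg⟩ := hp
    rw [mem_singleton_iff] at ha
    exact ⟨b2, hb2, ha ▸ hseg⟩
  have hgW' : ∀ y ∈ convexHull ℝ W', g y < g v := fun y hy => (hgc y hy).trans hgv
  have hgvc : (0:ℝ) < g v - c := sub_pos.2 hgv
  have hgmax : ∀ p ∈ convexHull ℝ W, g p ≤ g v ∧ (g p = g v → p = v) := by
    intro p hp
    obtain ⟨y, hy, a, b, ha, hb, hab, hpeq⟩ := hdecomp p hp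
    have hgy : g y < g v := hgW' y hy
    have hgp : g p = a * g v + b * g y := by
      rw [← hpeq]; simp [map_add, map_smul]
    have key : g v - g p = b * (g v - g y) := by linear_combination - hgp - g v * hab
    constructor
    · nlinarith [key, mul_nonneg hb (by linarith : (0:ℝ) ≤ g v - g y)]
    · intro heq
      have hb0 : b = 0 := by
        have h2 : b * (g v - g y) = 0 := by linarith [key]
        exact (mul_eq_zero.1 h2).resolve_right (by linarith)
      have ha1 : a = 1 := by linarith
      rw [← hpeq, hb0, ha1]; simp
  have hphi : ∀ p ∈ convexHull ℝ W, g p < g v →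
      (v + ((g v - c)/(g v - g p)) • (p - v)) ∈ convexHull ℝ W ∧
      g (v + ((g v - c)/(g v - g p)) • (p - v)) = c := by
    intro p hp hgp
    have hgvp0 : (0:ℝ) < g v - g p := sub_pos.2 hgp
    refine ⟨?_, ?_⟩
    · obtain ⟨y, hy, a, b, ha, hb, hab, hpeq⟩ := hdecomp p hp
      have hgy : g y < g v := hgW' y hy
      have hgyc : g y < c := hgc y hy
      have hgpy : g p = a * g v + b * g y := by rw [← hpeq]; simp [map_add, map_smul]
      have hpv : p - v = b • (y - v) := by
        have ha' : a = 1 - b := by linarith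
        rw [← hpeq, ha']; module
      have hgvp : g v - g p = b * (g v - g y) := by
        linear_combination - hgpy - g v * hab
      have hbpos : 0 < b := by
        by_contra hcon
        push_neg at hcon
        nlinarith [mul_nonpos_of_nonpos_of_nonneg hcon (by linarith : (0:ℝ) ≤ g v - g y)]
      have hbne : b ≠ 0 := ne_of_gt hbpos
      have hyne : g v - g y ≠ 0 := ne_of_gt (by linarith)
      have hcoef : (g v - c)/(g v - g p) * b = (g v - c)/(g v - g y) := by
        rw [hgvp]; field_simp; try ring
      have hkey : v + ((g v - c)/(g v - g p)) • (p - v)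
          = (1 - (g v - c)/(g v - g y)) • v + ((g v - c)/(g v - g y)) • y := by
        rw [hpv, smul_smul, hcoef]; module
      rw [hkey]
      have hs1 : (g v - c)/(g v - g y) ≤ 1 := by
        rw [div_le_one (by linarith)]; linarith
      have hs0 : 0 ≤ (g v - c)/(g v - g y) := le_of_lt (div_pos hgvc (by linarith))
      exact (convex_convexHull ℝ W).segment_subset hvQ (convexHull_mono diff_subset hy)
        ⟨1 - (g v - c)/(g v - g y), (g v - c)/(g v - g y), by linarith, hs0, by ring, rfl⟩
    · have : g (v + ((g v - c)/(g v - g p)) • (p - v))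
          = g v + ((g v - c)/(g v - g p)) * (g p - g v) := by
        simp [map_add, map_smul, map_sub]; try ring
      rw [this]
      have hne : g v - g p ≠ 0 := ne_of_gt hgvp0
      field_simp
      try ring
  set Qc : Set E := {p | p ∈ convexHull ℝ W ∧ g p = c} with hQcdef
  have hQcomp : IsCompact (convexHull ℝ W) := hW.isCompact_convexHull ℝ
  have hQconv : Convex ℝ (convexHull ℝ W) := convex_convexHull ℝ W
  have hQccomp : IsCompact Qc := by
    have heq : Qc = convexHull ℝ W ∩ g ⁻¹' {c} := by ext p; simp [hQcdef]
    rw [heq]; exact hQcomp.inter_right (isClosed_singleton.preimage g.continuous)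
  have hQcconv : Convex ℝ Qc := by
    intro p hp q hq a b ha hb hab
    refine ⟨hQconv hp.1 hq.1 ha hb hab, ?_⟩
    have : g (a • p + b • q) = a * g p + b * g q := by simp [map_add, map_smul]
    rw [this, hp.2, hq.2]; linear_combination c * hab
  have hQcne : Qc.Nonempty := by
    obtain ⟨y0, hy0⟩ := hW'ne
    have hy0' : y0 ∈ convexHull ℝ W' := subset_convexHull ℝ W' hy0
    have hy0Q : y0 ∈ convexHull ℝ W := convexHull_mono diff_subset hy0'
    exact ⟨_, (hphi y0 hy0Q (hgW' y0 hy0')).1, (hphi y0 hy0Q (hgW' y0 hy0')).2⟩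
  have hfcont : Continuous f := f.continuous_of_finiteDimensional
  obtain ⟨z1, hz1, hz1max⟩ := hQccomp.exists_isMaxOn hQcne hfcont.continuousOn
  set fc : E →L[ℝ] ℝ := ⟨f, hfcont⟩ with hfcdef
  set Fc : Set E := {p ∈ Qc | ∀ y ∈ Qc, fc y ≤ fc p} with hFcdef
  have hexp : IsExposed ℝ Qc Fc := fun _ => ⟨fc, rfl⟩
  have hFcne : Fc.Nonempty := ⟨z1, hz1, fun y hy => hz1max hy⟩
  obtain ⟨z, hzFc⟩ := (hexp.isCompact hQccomp).extremePoints_nonempty hFcne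
  have hzF : z ∈ Fc := extremePoints_subset hzFc
  have hzQc : z ∈ Qc := hzF.1
  have hzext : z ∈ Qc.extremePoints ℝ := hexp.isExtreme.extremePoints_subset_extremePoints hzFc
  have hzmax : ∀ y ∈ Qc, f y ≤ f z := fun y hy => hzF.2 y hy
  have hu0v : u0 ≠ v := fun h => by rw [h] at hfu0; exact lt_irrefl _ hfu0
  have hgu0 : g u0 < g v :=
    lt_of_le_of_ne ((hgmax u0 hu0).1) (fun h => hu0v ((hgmax u0 hu0).2 h))
  obtain ⟨hφu0Q, hφu0c⟩ := hphi u0 hu0 hgu0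
  have hratio : 0 < (g v - c)/(g v - g u0) := div_pos hgvc (by linarith)
  have hfφ : f v < f (v + ((g v - c)/(g v - g u0)) • (u0 - v)) := by
    have : f (v + ((g v - c)/(g v - g u0)) • (u0 - v))
        = f v + ((g v - c)/(g v - g u0)) * (f u0 - f v) := by
      simp [map_add, map_smul, map_sub]; try ring
    rw [this]; nlinarith
  have hfz : f v < f z := hfφ.trans_le (hzmax _ ⟨hφu0Q, hφu0c⟩)
  have hzv : z ≠ v := fun h => by rw [h] at hfz; exact lt_irrefl _ hfz
  have hgz : g z = c := hzQc.2
  have hzvne : z - v ≠ 0 := sub_ne_zero.2 hzv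
  set Es : Set E := {p | p ∈ convexHull ℝ W ∧ ∃ t : ℝ, 0 ≤ t ∧ p = v + t • (z - v)}
    with hEsdef
  have hEext : IsExtreme ℝ (convexHull ℝ W) Es := by
    constructor
    · exact fun p hp => hp.1
    · rintro p hp q hq xx ⟨hxQ, t, ht0, hxeq⟩ hxopen
      obtain ⟨a, b, ha, hb, hab, hsum⟩ := hxopen
      rcases eq_or_lt_of_le ht0 with ht0' | htpos
      · -- t = 0, so xx = v and we use extremality of v
        have hxv : xx = v := by rw [hxeq, ← ht0']; simp
        have hpq := hv.2 hp hq (by rw [← hxv]; exact ⟨a, b, ha, hb, hab, hsum⟩)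
        rw [hpq]; exact ⟨hvQ, 0, le_rfl, by simp⟩
      · -- t > 0
        have hgx : g xx = g v - t * (g v - c) := by
          rw [hxeq]; simp only [map_add, map_smul, map_sub, smul_eq_mul, hgz]; ring
        by_cases hpv : p = v
        · rw [hpv] at hsum
          have h2 : a • v + b • q = v + t • (z - v) := by rw [hsum, hxeq]
          have ha' : a = 1 - b := by linarith
          rw [ha'] at h2
          have h1 : b • (q - v) = t • (z - v) := by
            linear_combination (norm := module) h2
          have hq' : q = v + (b⁻¹ * t) • (z - v) := by
            have h3 : q - v = (b⁻¹ * t) • (z - v) := by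
              rw [← smul_smul, ← h1, smul_smul, inv_mul_cancel₀ (ne_of_gt hb), one_smul]
            rw [← h3]; abel
          rw [hpv]; exact ⟨hvQ, 0, le_rfl, by simp⟩
        · by_cases hqv : q = v
          · rw [hqv] at hsum
            have h2 : a • p + b • v = v + t • (z - v) := by rw [hsum, hxeq]
            have hb' : b = 1 - a := by linarith
            rw [hb'] at h2
            have h1 : a • (p - v) = t • (z - v) := by
              linear_combination (norm := module) h2
            have hp' : p = v + (a⁻¹ * t) • (z - v) := by
              have h3 : p - v = (a⁻¹ * t) • (z - v) := by
                rw [← smul_smul, ← h1, smul_smul, inv_mul_cancel₀ (ne_of_gt ha), one_smul]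
              rw [← h3]; abel
            exact ⟨hp, a⁻¹ * t, le_of_lt (mul_pos (inv_pos.2 ha) htpos), hp'⟩
          · have hgp : g p < g v :=
              lt_of_le_of_ne (hgmax p hp).1 (fun h => hpv ((hgmax p hp).2 h))
            have hgq : g q < g v :=
              lt_of_le_of_ne (hgmax q hq).1 (fun h => hqv ((hgmax q hq).2 h))
            obtain ⟨hφpQ, hφpc⟩ := hphi p hp hgp
            obtain ⟨hφqQ, hφqc⟩ := hphi q hq hgq
            have hgxe : g xx = a * g p + b * g q := by
              rw [← hsum]; simp only [map_add, map_smul, smul_eq_mul]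
            have hD : g v - g xx = t * (g v - c) := by rw [hgx]; ring
            have hDpos : 0 < g v - g xx := by rw [hD]; exact mul_pos htpos hgvc
            have hsumD : a * (g v - g p) + b * (g v - g q) = g v - g xx := by
              linear_combination g v * hab + hgxe
            set μ := b * (g v - g q) / (g v - g xx) with hμ
            have hμpos : 0 < μ := div_pos (mul_pos hb (sub_pos.2 hgq)) hDpos
            have hμlt : μ < 1 := by
              rw [hμ, div_lt_one hDpos]
              linarith [mul_pos ha (sub_pos.2 hgp)]
            have h1μ : 1 - μ = a * (g v - g p) / (g v - g xx) := by
              rw [hμ]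
              rw [eq_div_iff (ne_of_gt hDpos), sub_mul, div_mul_cancel₀ _ (ne_of_gt hDpos)]
              linarith [hsumD]
            have hμα : (1 - μ) * ((g v - c)/(g v - g p)) = a / t := by
              rw [h1μ, hD]
              have h8 : g v - g p ≠ 0 := ne_of_gt (sub_pos.2 hgp)
              have h9 : t ≠ 0 := ne_of_gt htpos
              have h10 : g v - c ≠ 0 := ne_of_gt hgvc
              field_simp
            have hμβ : μ * ((g v - c)/(g v - g q)) = b / t := by
              rw [hμ, hD]
              have h8 : g v - g q ≠ 0 := ne_of_gt (sub_pos.2 hgq)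
              have h9 : t ≠ 0 := ne_of_gt htpos
              have h10 : g v - c ≠ 0 := ne_of_gt hgvc
              field_simp
            have hz2 : z = v + t⁻¹ • (a • p + b • q - v) := by
              have h11 : a • p + b • q - v = t • (z - v) := by
                rw [hsum, hxeq]; abel
              rw [h11, smul_smul, inv_mul_cancel₀ (ne_of_gt htpos), one_smul]; abel
            have hcomb : (1 - μ) • (v + ((g v - c)/(g v - g p)) • (p - v))
                + μ • (v + ((g v - c)/(g v - g q)) • (q - v)) = z := by
              rw [hz2]
              have ha' : a = 1 - b := by linarith
              have h9 : t ≠ 0 := ne_of_gt htpos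
              calc (1 - μ) • (v + ((g v - c)/(g v - g p)) • (p - v))
                  + μ • (v + ((g v - c)/(g v - g q)) • (q - v))
                  = (1 - μ) • v + ((1 - μ) * ((g v - c)/(g v - g p))) • (p - v)
                    + μ • v + (μ * ((g v - c)/(g v - g q))) • (q - v) := by module
                _ = (1 - μ) • v + (a / t) • (p - v) + μ • v + (b / t) • (q - v) := by
                    rw [hμα, hμβ]
                _ = v + t⁻¹ • (a • p + b • q - v) := by
                    rw [ha']; field_simp; module
            have hzopen : z ∈ openSegment ℝ (v + ((g v - c)/(g v - g p)) • (p - v))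
                (v + ((g v - c)/(g v - g q)) • (q - v)) :=
              ⟨1 - μ, μ, by linarith, hμpos, by ring, hcomb⟩
            have hφpz := hzext.2 ⟨hφpQ, hφpc⟩ ⟨hφqQ, hφqc⟩ hzopen
            have hαpos : 0 < (g v - c)/(g v - g p) := div_pos hgvc (sub_pos.2 hgp)
            have hβpos : 0 < (g v - c)/(g v - g q) := div_pos hgvc (sub_pos.2 hgq)
            refine ⟨hp, ((g v - c)/(g v - g p))⁻¹, le_of_lt (inv_pos.2 hαpos), ?_⟩
            have h5 : ((g v - c)/(g v - g p)) • (p - v) = z - v := by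
              rw [← hφpz]; abel
            have h6 : p - v = ((g v - c)/(g v - g p))⁻¹ • (z - v) := by
              rw [← h5, smul_smul, inv_mul_cancel₀ (ne_of_gt hαpos), one_smul]
            rw [← h6]; abel
  have hQcl : IsClosed (convexHull ℝ W) := hQcomp.isClosed
  set Ts : Set ℝ := {t : ℝ | 0 ≤ t ∧ v + t • (z - v) ∈ convexHull ℝ W} with hTsdef
  have h0T : (0:ℝ) ∈ Ts := ⟨le_rfl, by simpa using hvQ⟩
  have h1T : (1:ℝ) ∈ Ts := by
    refine ⟨zero_le_one, ?_⟩
    have hzz : v + (1:ℝ) • (z - v) = z := by module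
    rw [hzz]; exact hzQc.1
  have hTscl : IsClosed Ts := by
    have heq : Ts = Ici (0:ℝ) ∩ (fun t : ℝ => v + t • (z - v)) ⁻¹' (convexHull ℝ W) := by
      ext t; simp [hTsdef, Set.mem_Ici]
    rw [heq]
    exact isClosed_Ici.inter (hQcl.preimage (by fun_prop))
  have hTsbdd : BddAbove Ts := by
    obtain ⟨C, hC⟩ := isBounded_iff_forall_norm_le.1 hQcomp.isBounded
    refine ⟨(C + ‖v‖)/‖z - v‖, fun t ht => ?_⟩
    have h1 : t * ‖z - v‖ = ‖t • (z - v)‖ := by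
      rw [norm_smul, Real.norm_eq_abs, abs_of_nonneg ht.1]
    have h2 : ‖t • (z - v)‖ ≤ C + ‖v‖ := by
      have h3 : ‖v + t • (z - v)‖ ≤ C := hC _ ht.2
      have h4 : t • (z - v) = (v + t • (z - v)) - v := by abel
      calc ‖t • (z - v)‖ = ‖(v + t • (z - v)) - v‖ := by rw [← h4]
        _ ≤ ‖v + t • (z - v)‖ + ‖v‖ := norm_sub_le _ _
        _ ≤ C + ‖v‖ := by linarith
    rw [le_div_iff₀ (norm_pos_iff.2 hzvne)]
    linarith
  set tm := sSup Ts with htm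
  have htmT : tm ∈ Ts := hTscl.csSup_mem ⟨0, h0T⟩ hTsbdd
  have htm1 : 1 ≤ tm := le_csSup hTsbdd h1T
  have htmpos : 0 < tm := lt_of_lt_of_le one_pos htm1
  set u := v + tm • (z - v) with hu
  have huQ : u ∈ convexHull ℝ W := htmT.2
  have hEseg : Es = segment ℝ v u := by
    ext p
    constructor
    · rintro ⟨hpQ, t, ht0, rfl⟩
      have htT : t ∈ Ts := ⟨ht0, hpQ⟩
      have htle : t ≤ tm := le_csSup hTsbdd htT
      refine ⟨1 - t/tm, t/tm, ?_, ?_, by ring, ?_⟩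
      · have : t/tm ≤ 1 := by rw [div_le_one htmpos]; exact htle
        linarith
      · positivity
      · have expand : (1 - t/tm) • v + (t/tm) • (v + tm • (z - v))
            = v + ((t/tm)*tm) • (z - v) := by module
        rw [hu, expand, div_mul_cancel₀ t (ne_of_gt htmpos)]
    · rintro ⟨a, b, ha, hb, hab, rfl⟩
      refine ⟨(convex_convexHull ℝ W).segment_subset hvQ huQ ⟨a,b,ha,hb,hab,rfl⟩,
        b * tm, mul_nonneg hb (le_of_lt htmpos), ?_⟩
      rw [hu]
      have ha' : a = 1 - b := by linarith
      rw [ha']; module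
  have hufv : f v < f u := by
    have hfe : f u = f v + tm * (f z - f v) := by
      rw [hu]; simp only [map_add, map_smul, map_sub, smul_eq_mul]
    rw [hfe]; nlinarith
  have hune : v ≠ u := fun h => by rw [← h] at hufv; exact lt_irrefl _ hufv
  have huE : u ∈ Es := ⟨huQ, tm, le_of_lt htmpos, hu⟩
  have huEP : u ∈ (convexHull ℝ W).extremePoints ℝ := by
    apply hEext.extremePoints_subset_extremePoints
    refine ⟨huE, ?_⟩
    rintro p ⟨hpQ, tp, htp0, rfl⟩ q ⟨hqQ, tq, htq0, rfl⟩ ⟨a, b, ha, hb, hab, hsum⟩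
    have htple : tp ≤ tm := le_csSup hTsbdd ⟨htp0, hpQ⟩
    have htqle : tq ≤ tm := le_csSup hTsbdd ⟨htq0, hqQ⟩
    have hkey : ((1-b)*tp + b*tq - tm) • (z - v) = 0 := by
      have ha' : a = 1 - b := by linarith
      rw [ha'] at hsum
      rw [hu] at hsum
      linear_combination (norm := module) hsum
    have hsc : (1-b)*tp + b*tq - tm = 0 := by
      rcases smul_eq_zero.1 hkey with h | h
      · exact h
      · exact absurd h hzvne
    have haux : ((1:ℝ) - b) + b = 1 := by ring
    have htpm : tp = tm := by
      by_contra hne2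
      have hlt : tp < tm := lt_of_le_of_ne htple hne2
      have ha0 : 0 < 1 - b := by linarith
      nlinarith [mul_pos ha0 (sub_pos.2 hlt), mul_nonneg hb.le (sub_nonneg.2 htqle)]
    have htqm : tq = tm := by
      by_contra hne2
      have hlt : tq < tm := lt_of_le_of_ne htqle hne2
      have ha0 : 0 < 1 - b := by linarith
      nlinarith [mul_pos hb (sub_pos.2 hlt), mul_nonneg ha0.le (sub_nonneg.2 htple)]
    rw [htpm]
  refine ⟨u, huEP, hufv, hune, ?_⟩
  rw [← hEseg]
  exact hEext



theorem bal_climb {W Q : Set E} (hW : W.Finite) (hQ : Q = convexHull ℝ W)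
    (f : E →ₗ[ℝ] ℝ) {a : E} (ha : a ∈ Q.extremePoints ℝ) :
    ∃ b ∈ Q.extremePoints ℝ, (∀ y ∈ Q, f y ≤ f b) ∧
      Relation.ReflTransGen (fun p q => p ∈ Q.extremePoints ℝ ∧ q ∈ Q.extremePoints ℝ ∧
        p ≠ q ∧ f p < f q ∧ IsExtreme ℝ Q (segment ℝ p q)) a b := by
  have hEPfin : (Q.extremePoints ℝ).Finite := by
    rw [hQ]; exact hW.subset extremePoints_convexHull_subset
  have hQcomp : IsCompact Q := hQ ▸ hW.isCompact_convexHull ℝ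
  have hQconv : Convex ℝ Q := hQ ▸ convex_convexHull ℝ W
  have hQKM : Q = convexHull ℝ (Q.extremePoints ℝ) := by
    have h1 := closure_convexHull_extremePoints hQcomp hQconv
    have h2 : closure (convexHull ℝ (Q.extremePoints ℝ)) = convexHull ℝ (Q.extremePoints ℝ) :=
      (hEPfin.isCompact_convexHull ℝ).isClosed.closure_eq
    rw [← h2]
    exact h1.symm
  suffices H : ∀ n : ℕ, ∀ x, x ∈ Q.extremePoints ℝ →
      ({u ∈ Q.extremePoints ℝ | f x < f u}).ncard ≤ n →
      ∃ b ∈ Q.extremePoints ℝ, (∀ y ∈ Q, f y ≤ f b) ∧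
        Relation.ReflTransGen (fun p q => p ∈ Q.extremePoints ℝ ∧ q ∈ Q.extremePoints ℝ ∧
          p ≠ q ∧ f p < f q ∧ IsExtreme ℝ Q (segment ℝ p q)) x b by
    exact H _ a ha le_rfl
  intro n
  induction n with
  | zero =>
    intro x hx hcard
    by_cases hmax : ∀ u ∈ Q.extremePoints ℝ, f u ≤ f x
    · refine ⟨x, hx, ?_, Relation.ReflTransGen.refl⟩
      intro y hy
      rw [hQKM] at hy
      exact bal_le_on_hull hmax y hy
    · exfalso
      push_neg at hmax
      obtain ⟨u1, hu1, hlt⟩ := hmax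
      have hmem : u1 ∈ {u ∈ Q.extremePoints ℝ | f x < f u} := ⟨hu1, hlt⟩
      have hfin : ({u ∈ Q.extremePoints ℝ | f x < f u}).Finite :=
        hEPfin.subset (sep_subset _ _)
      have h0 : ({u ∈ Q.extremePoints ℝ | f x < f u}).ncard = 0 :=
        le_antisymm hcard (Nat.zero_le _)
      rw [Set.ncard_eq_zero hfin] at h0
      rw [h0] at hmem
      exact notMem_empty _ hmem
  | succ n ih =>
    intro x hx hcard
    by_cases hmax : ∀ u ∈ Q.extremePoints ℝ, f u ≤ f x
    · refine ⟨x, hx, ?_, Relation.ReflTransGen.refl⟩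
      intro y hy
      rw [hQKM] at hy
      exact bal_le_on_hull hmax y hy
    · push_neg at hmax
      obtain ⟨u1, hu1, hlt⟩ := hmax
      obtain ⟨a', ha', hfa', hne, hext⟩ := bal_improve hW hQ hx f (extremePoints_subset hu1) hlt
      have hsub : {u ∈ Q.extremePoints ℝ | f a' < f u}
          ⊆ {u ∈ Q.extremePoints ℝ | f x < f u} \ {a'} := by
        rintro w ⟨hw, hfw⟩
        refine ⟨⟨hw, lt_trans hfa' hfw⟩, fun hww => ?_⟩
        rw [mem_singleton_iff] at hww
        rw [hww] at hfw
        exact lt_irrefl _ hfw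
      have hfinx : ({u ∈ Q.extremePoints ℝ | f x < f u}).Finite :=
        hEPfin.subset (sep_subset _ _)
      have hcard' : ({u ∈ Q.extremePoints ℝ | f a' < f u}).ncard ≤ n := by
        have h1 : ({u ∈ Q.extremePoints ℝ | f x < f u} \ {a'}).ncard
            = ({u ∈ Q.extremePoints ℝ | f x < f u}).ncard - 1 :=
          Set.ncard_diff_singleton_of_mem ⟨ha', hfa'⟩
        have h2 := Set.ncard_le_ncard hsub hfinx.diff
        have h3 : 0 < ({u ∈ Q.extremePoints ℝ | f x < f u}).ncard :=
          (Set.ncard_pos hfinx).2 ⟨a', ha', hfa'⟩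
        omega
      obtain ⟨b, hb, hbmax, hbpath⟩ := ih a' ha' hcard'
      exact ⟨b, hb, hbmax, Relation.ReflTransGen.head ⟨hx, ha', hne, hfa', hext⟩ hbpath⟩

theorem bal_face {P : Set E} (hPconv : Convex ℝ P) (hPcomp : IsCompact P)
    (hEPfin : (P.extremePoints ℝ).Finite) (φ : E →L[ℝ] ℝ) {p1 : E} (hp1 : p1 ∈ P)
    (hp1max : ∀ y ∈ P, φ y ≤ φ p1) :
    ∃ T : Set E, IsExtreme ℝ P T ∧ T = convexHull ℝ (T.extremePoints ℝ) ∧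
      (T.extremePoints ℝ).Finite ∧ T.extremePoints ℝ ⊆ P.extremePoints ℝ ∧
      (T.extremePoints ℝ).Nonempty ∧ (∀ p ∈ T, φ p = φ p1) ∧
      (∀ p ∈ P, φ p = φ p1 → p ∈ T) := by
  set T : Set E := {x ∈ P | ∀ y ∈ P, φ y ≤ φ x} with hT
  have hexp : IsExposed ℝ P T := fun _ => ⟨φ, rfl⟩
  have hTne : T.Nonempty := ⟨p1, hp1, hp1max⟩
  have hText : IsExtreme ℝ P T := hexp.isExtreme
  have hTcomp : IsCompact T := hexp.isCompact hPcomp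
  have hTconv : Convex ℝ T := hexp.convex hPconv
  have hTsub : T.extremePoints ℝ ⊆ P.extremePoints ℝ :=
    hText.extremePoints_subset_extremePoints
  have hTfin : (T.extremePoints ℝ).Finite := hEPfin.subset hTsub
  have hTKM : T = convexHull ℝ (T.extremePoints ℝ) := by
    have h1 := closure_convexHull_extremePoints hTcomp hTconv
    have h2 : closure (convexHull ℝ (T.extremePoints ℝ)) = convexHull ℝ (T.extremePoints ℝ) :=
      (hTfin.isCompact_convexHull ℝ).isClosed.closure_eq
    rw [← h2]
    exact h1.symm
  refine ⟨T, hText, hTKM, hTfin, hTsub, ?_, ?_, ?_⟩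
  · exact hTcomp.extremePoints_nonempty hTne
  · intro p hp
    exact le_antisymm (hp1max p hp.1) (hp.2 p1 hp1)
  · intro p hp hval
    exact ⟨hp, fun y hy => le_trans (hp1max y hy) (le_of_eq hval.symm)⟩

end BalinskiAux

/-- Balinski's theorem.  The edge graph of a full-dimensional convex
polytope `P ⊂ ℝ^d` is `d`-connected: deleting any `d - 1` vertices leaves it
connected. -/
theorem balinski {d : ℕ} (P : Set (Fin d → ℝ)) (V : Finset (Fin d → ℝ))
    (hP : P = convexHull ℝ (V : Set (Fin d → ℝ)))
    (hfull : affineSpan ℝ P = ⊤)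
    (S : Finset (Fin d → ℝ)) (hS : (S : Set (Fin d → ℝ)) ⊆ Set.extremePoints ℝ P)
    (hcard : S.card ≤ d - 1) :
    ∀ x ∈ Set.extremePoints ℝ P \ S, ∀ y ∈ Set.extremePoints ℝ P \ S,
      Relation.ReflTransGen
        (fun a b : Fin d → ℝ =>
          a ∈ Set.extremePoints ℝ P \ S ∧ b ∈ Set.extremePoints ℝ P \ S ∧
          a ≠ b ∧ IsExtreme ℝ P (segment ℝ a b)) x y := by
  classical
  intro x hx y hy
  rcases Nat.eq_zero_or_pos d with hd0 | hd
  · subst hd0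
    have hxy : x = y := funext fun i => i.elim0
    rw [hxy]
  · set R : (Fin d → ℝ) → (Fin d → ℝ) → Prop := fun a b =>
      a ∈ Set.extremePoints ℝ P \ ↑S ∧ b ∈ Set.extremePoints ℝ P \ ↑S ∧
      a ≠ b ∧ IsExtreme ℝ P (segment ℝ a b) with hRdef
    show Relation.ReflTransGen R x y
    have hsymmR : Symmetric R := by
      rintro a b ⟨ha, hb, hne, hext⟩
      exact ⟨hb, ha, hne.symm, by rwa [segment_symm]⟩
    have hPconv : Convex ℝ P := hP ▸ convex_convexHull ℝ _
    have hPcomp : IsCompact P := hP ▸ V.finite_toSet.isCompact_convexHull ℝ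
    have hEPV : Set.extremePoints ℝ P ⊆ ↑V := hP ▸ extremePoints_convexHull_subset
    have hEPfin : (Set.extremePoints ℝ P).Finite := V.finite_toSet.subset hEPV
    have hxEP : x ∈ Set.extremePoints ℝ P := hx.1
    have hxP : x ∈ P := extremePoints_subset hxEP
    have hyEP : y ∈ Set.extremePoints ℝ P := hy.1
    have hyP : y ∈ P := extremePoints_subset hyEP
    have hxS : x ∉ S := hx.2
    have hyS : y ∉ S := hy.2
    -- construct the functional f constant on S ∪ {x}
    obtain ⟨f, hf0, hfS⟩ : ∃ f : Module.Dual ℝ (Fin d → ℝ), f ≠ 0 ∧ ∀ s ∈ S, f s = f x := by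
      set U : Submodule ℝ (Fin d → ℝ) :=
        Submodule.span ℝ ↑(S.image (fun s => s - x)) with hU
      have hUlt : U < ⊤ := by
        rw [lt_top_iff_ne_top]
        intro htop
        have h1 : Module.finrank ℝ U ≤ (S.image (fun s => s - x)).card :=
          finrank_span_finset_le_card _
        have h2 : (S.image (fun s => s - x)).card ≤ S.card := Finset.card_image_le
        have h4 : Module.finrank ℝ U = d := by
          rw [htop, finrank_top, Module.finrank_fin_fun]
        omega
      obtain ⟨f, hf0, hker⟩ := Submodule.exists_dual_map_eq_bot_of_lt_top hUlt inferInstance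
      refine ⟨f, hf0, fun s hs => ?_⟩
      have hmem : s - x ∈ U := Submodule.subset_span (by
        rw [Finset.coe_image, Set.mem_image]
        exact ⟨s, Finset.mem_coe.2 hs, rfl⟩)
      have hmem2 : f (s - x) ∈ U.map f := Submodule.mem_map_of_mem hmem
      rw [hker, Submodule.mem_bot] at hmem2
      rw [map_sub] at hmem2
      linarith [hmem2]
    -- construct a functional h injective on V
    obtain ⟨h, hinj⟩ : ∃ h : Module.Dual ℝ (Fin d → ℝ),
        ∀ a ∈ V, ∀ b ∈ V, a ≠ b → h a ≠ h b := by
      set Ks : Finset (Subspace ℝ (Module.Dual ℝ (Fin d → ℝ))) :=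
        ((V ×ˢ V).filter (fun p => p.1 ≠ p.2)).image
          (fun p => LinearMap.ker (Module.Dual.eval ℝ (Fin d → ℝ) (p.1 - p.2))) with hKs
      have htopK : ⊤ ∉ Ks := by
        intro htop
        rw [hKs, Finset.mem_image] at htop
        obtain ⟨p, hpmem, hpk⟩ := htop
        rw [Finset.mem_filter] at hpmem
        have hne : p.1 - p.2 ≠ 0 := sub_ne_zero.2 hpmem.2
        have hz : Module.Dual.eval ℝ (Fin d → ℝ) (p.1 - p.2) = 0 := LinearMap.ker_eq_top.1 hpk
        have h5 : ∀ φ : Module.Dual ℝ (Fin d → ℝ), φ (p.1 - p.2) = 0 := by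
          intro φ
          have h6 := congrArg (fun g => g φ) hz
          simpa [Module.Dual.eval_apply] using h6
        exact hne ((Module.forall_dual_apply_eq_zero_iff ℝ _).1 h5)
      have hcover := Subspace.biUnion_ne_univ_of_top_notMem htopK
      rw [Set.ne_univ_iff_exists_notMem] at hcover
      obtain ⟨h, hh⟩ := hcover
      refine ⟨h, fun a haV b hbV hab heq => hh ?_⟩
      rw [Set.mem_iUnion₂]
      refine ⟨LinearMap.ker (Module.Dual.eval ℝ (Fin d → ℝ) (a - b)), ?_, ?_⟩
      · rw [hKs, Finset.mem_image]
        exact ⟨(a, b), Finset.mem_filter.2 ⟨Finset.mem_product.2 ⟨haV, hbV⟩, hab⟩, rfl⟩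
      · rw [SetLike.mem_coe, LinearMap.mem_ker, Module.Dual.eval_apply, map_sub]
        rw [heq]; ring
    -- max and min of f over P
    obtain ⟨pM, hpMP, hpMmax⟩ := hPcomp.exists_isMaxOn ⟨x, hxP⟩
      f.continuous_of_finiteDimensional.continuousOn
    obtain ⟨pm, hpmP, hpmmin⟩ := hPcomp.exists_isMinOn ⟨x, hxP⟩
      f.continuous_of_finiteDimensional.continuousOn
    have hmM : f pm < f pM := by
      obtain ⟨p0, hp0⟩ := hPconv.interior_nonempty_iff_affineSpan_eq_top.2 hfull
      obtain ⟨w, hw⟩ : ∃ w, f w ≠ 0 := by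
        by_contra hcon; push_neg at hcon
        exact hf0 (LinearMap.ext fun w => hcon w)
      obtain ⟨ε, hε, hball⟩ := Metric.isOpen_iff.1 isOpen_interior p0 hp0
      have hwpos : 0 < ‖w‖ := norm_pos_iff.2 (fun hzero => hw (by rw [hzero, map_zero]))
      set δ := ε / (2 * ‖w‖) with hδ
      have hδpos : 0 < δ := by positivity
      have hdist : ∀ c : ℝ, |c| = δ → p0 + c • w ∈ P := by
        intro c hc
        apply interior_subset
        apply hball
        rw [Metric.mem_ball, dist_eq_norm]
        have hh : p0 + c • w - p0 = c • w := by abel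
        rw [hh, norm_smul, Real.norm_eq_abs, hc, hδ]
        calc ε / (2 * ‖w‖) * ‖w‖ = ε / 2 := by field_simp
          _ < ε := by linarith
      have hmem1 : p0 + δ • w ∈ P := hdist δ (abs_of_pos hδpos)
      have hmem2 : p0 + (-δ) • w ∈ P := hdist (-δ) (by rw [abs_neg, abs_of_pos hδpos])
      have h6 : f (p0 + δ • w) = f p0 + δ * f w := by
        simp only [map_add, map_smul, smul_eq_mul]
      have h7 : f (p0 + (-δ) • w) = f p0 - δ * f w := by
        simp only [map_add, map_smul, smul_eq_mul]; ring
      have h8 : f pm ≤ f (p0 + δ • w) := hpmmin hmem1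
      have h9 : f pm ≤ f (p0 + (-δ) • w) := hpmmin hmem2
      have h10 : f (p0 + δ • w) ≤ f pM := hpMmax hmem1
      have h11 : f (p0 + (-δ) • w) ≤ f pM := hpMmax hmem2
      rcases lt_or_gt_of_ne hw with hwneg | hwpos'
      · nlinarith [mul_neg_of_pos_of_neg hδpos hwneg]
      · nlinarith [mul_pos hδpos hwpos']
    -- the top and bottom faces
    set fc : (Fin d → ℝ) →L[ℝ] ℝ := ⟨f, f.continuous_of_finiteDimensional⟩ with hfc
    obtain ⟨T, hText, hTKM, hTfin, hTsub, hTvne, hTval, hTmem⟩ :=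
      bal_face hPconv hPcomp hEPfin fc hpMP (fun y' hy' => hpMmax hy')
    obtain ⟨B, hBext, hBKM, hBfin, hBsub, hBvne, hBval, hBmem⟩ :=
      bal_face hPconv hPcomp hEPfin (-fc) hpmP (fun y' hy' => by
        simp only [ContinuousLinearMap.neg_apply]
        exact neg_le_neg (hpmmin hy'))
    obtain ⟨w0, hw0⟩ := hTvne
    obtain ⟨tstar, htstarEP, htstarmax, _⟩ := bal_climb hTfin hTKM h hw0
    obtain ⟨w1, hw1⟩ := hBvne
    obtain ⟨bstar, hbstarEP, hbstarmax, _⟩ := bal_climb hBfin hBKM h hw1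
    -- conversion of monotone paths in P
    have convertP : ∀ (φ : Module.Dual ℝ (Fin d → ℝ)), (∀ s ∈ S, φ s = φ x) →
        ∀ v b : Fin d → ℝ, v ∉ S → φ x ≤ φ v →
        Relation.ReflTransGen (fun p q => p ∈ Set.extremePoints ℝ P ∧
          q ∈ Set.extremePoints ℝ P ∧ p ≠ q ∧ φ p < φ q ∧ IsExtreme ℝ P (segment ℝ p q)) v b →
        Relation.ReflTransGen R v b ∧ φ x ≤ φ b ∧ b ∉ S := by
      intro φ hφS v b hvS hvc hpath
      induction hpath with
      | refl => exact ⟨Relation.ReflTransGen.refl, hvc, hvS⟩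
      | @tail b' c' hab hbc ih =>
        obtain ⟨ihpath, ihle, ihS⟩ := ih
        obtain ⟨hp, hq, hne, hlt, hext⟩ := hbc
        have hcS : c' ∉ S := by
          intro hmem
          have hcx := hφS c' hmem
          linarith
        exact ⟨ihpath.tail ⟨⟨hp, ihS⟩, ⟨hq, hcS⟩, hne, hext⟩, by linarith, hcS⟩
    -- conversion of paths inside a face disjoint from S
    have convertFace : ∀ (T' : Set (Fin d → ℝ)), IsExtreme ℝ P T' →
        (∀ s ∈ S, s ∉ T') →
        ∀ (ψ : Module.Dual ℝ (Fin d → ℝ)) (v b : Fin d → ℝ),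
        Relation.ReflTransGen (fun p q => p ∈ T'.extremePoints ℝ ∧ q ∈ T'.extremePoints ℝ ∧
          p ≠ q ∧ ψ p < ψ q ∧ IsExtreme ℝ T' (segment ℝ p q)) v b →
        Relation.ReflTransGen R v b := by
      intro T' hT'ext hT'S ψ v b hpath
      refine Relation.ReflTransGen.mono ?_ _ _ hpath
      rintro p q ⟨hp, hq, hne, hlt, hext⟩
      have hpS : p ∉ S := fun hmem => hT'S p hmem (extremePoints_subset hp)
      have hqS : q ∉ S := fun hmem => hT'S q hmem (extremePoints_subset hq)
      exact ⟨⟨hT'ext.extremePoints_subset_extremePoints hp, hpS⟩,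
        ⟨hT'ext.extremePoints_subset_extremePoints hq, hqS⟩, hne, hT'ext.trans hext⟩
    -- reaching the top sink
    have reachT : f x < f pM → ∀ v : Fin d → ℝ, v ∈ Set.extremePoints ℝ P → v ∉ S →
        f x ≤ f v → Relation.ReflTransGen R v tstar := by
      intro hcM v hvEP hvS hvc
      obtain ⟨b, hbEP, hbmax, hbpath⟩ := bal_climb V.finite_toSet hP f hvEP
      obtain ⟨hRpath, hble, hbS⟩ := convertP f hfS v b hvS hvc hbpath
      have hbP : b ∈ P := extremePoints_subset hbEP
      have hbT : b ∈ T := hTmem b hbP (le_antisymm (hpMmax hbP) (hbmax pM hpMP))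
      have hbTEP : b ∈ T.extremePoints ℝ :=
        inter_extremePoints_subset_extremePoints_of_subset hText.1 ⟨hbT, hbEP⟩
      have hTS : ∀ s ∈ S, s ∉ T := by
        intro s hsS hsT
        have h1 : fc s = fc pM := hTval s hsT
        have h2 : f s = f x := hfS s hsS
        have h3 : f s = f pM := h1
        rw [h2] at h3
        exact absurd h3 (ne_of_lt hcM)
      obtain ⟨t2, ht2EP, ht2max, ht2path⟩ := bal_climb hTfin hTKM h hbTEP
      have ht2eq : t2 = tstar := by
        by_contra hne2
        exact hinj t2 (hEPV (hTsub ht2EP)) tstar (hEPV (hTsub htstarEP)) hne2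
          (le_antisymm (htstarmax t2 (extremePoints_subset ht2EP))
            (ht2max tstar (extremePoints_subset htstarEP)))
      have hfacepath := convertFace T hText hTS h b t2 ht2path
      rw [ht2eq] at hfacepath
      exact hRpath.trans hfacepath
    -- reaching the bottom sink
    have reachB : f pm < f x → ∀ v : Fin d → ℝ, v ∈ Set.extremePoints ℝ P → v ∉ S →
        f v ≤ f x → Relation.ReflTransGen R v bstar := by
      intro hcm v hvEP hvS hvc
      obtain ⟨b, hbEP, hbmax, hbpath⟩ := bal_climb V.finite_toSet hP (-f) hvEP
      have hφS : ∀ s ∈ S, (-f) s = (-f) x := by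
        intro s hs
        simp only [LinearMap.neg_apply, hfS s hs]
      obtain ⟨hRpath, hble, hbS⟩ := convertP (-f) hφS v b hvS
        (by simp only [LinearMap.neg_apply]; exact neg_le_neg hvc) hbpath
      have hbP : b ∈ P := extremePoints_subset hbEP
      have hbB : b ∈ B := by
        apply hBmem b hbP
        have h1 : f pm ≤ f b := hpmmin hbP
        have h2 : (-f) pm ≤ (-f) b := hbmax pm hpmP
        have h2' : f b ≤ f pm := by
          simp only [LinearMap.neg_apply] at h2; linarith
        show (-fc) b = (-fc) pm
        simp only [ContinuousLinearMap.neg_apply]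
        exact congrArg Neg.neg (le_antisymm h2' h1)
      have hbBEP : b ∈ B.extremePoints ℝ :=
        inter_extremePoints_subset_extremePoints_of_subset hBext.1 ⟨hbB, hbEP⟩
      have hBS : ∀ s ∈ S, s ∉ B := by
        intro s hsS hsB
        have h1 : (-fc) s = (-fc) pm := hBval s hsB
        have h1' : f s = f pm := by
          simp only [ContinuousLinearMap.neg_apply] at h1
          have := neg_injective h1
          exact this
        have h2 : f s = f x := hfS s hsS
        rw [h2] at h1'
        rw [h1'] at hcm
        exact lt_irrefl _ hcm
      obtain ⟨b2, hb2EP, hb2max, hb2path⟩ := bal_climb hBfin hBKM h hbBEP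
      have hb2eq : b2 = bstar := by
        by_contra hne2
        exact hinj b2 (hEPV (hBsub hb2EP)) bstar (hEPV (hBsub hbstarEP)) hne2
          (le_antisymm (hbstarmax b2 (extremePoints_subset hb2EP))
            (hb2max bstar (extremePoints_subset hbstarEP)))
      have hfacepath := convertFace B hBext hBS h b b2 hb2path
      rw [hb2eq] at hfacepath
      exact hRpath.trans hfacepath
    -- final assembly
    rcases eq_or_lt_of_le (show f x ≤ f pM from hpMmax hxP) with hMx | hMx
    · have hcm : f pm < f x := by rw [hMx]; exact hmM
      have px := reachB hcm x hxEP hxS le_rfl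
      have py := reachB hcm y hyEP hyS (by rw [hMx]; exact hpMmax hyP)
      exact px.trans (Relation.ReflTransGen.mono (fun a b (hab : R b a) => hsymmR hab) _ _ (Relation.ReflTransGen.swap _ _ py))
    · rcases le_or_gt (f x) (f y) with hxy' | hxy'
      · have px := reachT hMx x hxEP hxS le_rfl
        have py := reachT hMx y hyEP hyS hxy'
        exact px.trans (Relation.ReflTransGen.mono (fun a b (hab : R b a) => hsymmR hab) _ _ (Relation.ReflTransGen.swap _ _ py))
      · have hcm : f pm < f x := lt_of_le_of_lt (hpmmin hyP) hxy'
        have px := reachB hcm x hxEP hxS le_rfl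
        have py := reachB hcm y hyEP hyS (le_of_lt hxy')
        exact px.trans (Relation.ReflTransGen.mono (fun a b (hab : R b a) => hsymmR hab) _ _ (Relation.ReflTransGen.swap _ _ py))
end

section
/- The two-dimensional fan in ℝ^5 that is the union of the standard tropical plane in span{e_1,e_2,e_3} and the standard tropical plane in span{e_1,e4,e_5}, glued along the ray through e_1, is not 2-connected through codimension one: removing a single closed 2-dimensional cone containing the ray e_1 disconnects its facet-ridge graph. -/
/-- The faces of the two-dimensional fan in `ℝ^5` consisting of the standard
tropical planes in `span{e₁,e₂,e₃}` and `span{e₁,e₄,e₅}`, glued along the ray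
through `e₁`. -/
def twoPlanesFan : Set (Set (Fin 5 → ℝ)) :=
  {{(0 : Fin 5 → ℝ)}} ∪
  {ray ![1,0,0,0,0], ray ![0,1,0,0,0], ray ![0,0,1,0,0], ray ![-1,-1,-1,0,0],
   ray ![0,0,0,1,0], ray ![0,0,0,0,1], ray ![-1,0,0,-1,-1]} ∪
  {cone2 ![1,0,0,0,0] ![0,1,0,0,0], cone2 ![1,0,0,0,0] ![0,0,1,0,0],
   cone2 ![1,0,0,0,0] ![-1,-1,-1,0,0], cone2 ![0,1,0,0,0] ![0,0,1,0,0],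
   cone2 ![0,1,0,0,0] ![-1,-1,-1,0,0], cone2 ![0,0,1,0,0] ![-1,-1,-1,0,0],
   cone2 ![1,0,0,0,0] ![0,0,0,1,0], cone2 ![1,0,0,0,0] ![0,0,0,0,1],
   cone2 ![1,0,0,0,0] ![-1,0,0,-1,-1], cone2 ![0,0,0,1,0] ![0,0,0,0,1],
   cone2 ![0,0,0,1,0] ![-1,0,0,-1,-1], cone2 ![0,0,0,0,1] ![-1,0,0,-1,-1]}


section Aux

lemma vectorSpan_cone2 {n : ℕ} (u v : Fin n → ℝ) :
    vectorSpan ℝ (cone2 u v) = Submodule.span ℝ {u, v} := by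
  apply le_antisymm
  · rw [vectorSpan_def, Submodule.span_le]
    rintro x hx
    rw [Set.mem_vsub] at hx
    obtain ⟨a, ⟨s1, t1, _, _, rfl⟩, b, ⟨s2, t2, _, _, rfl⟩, rfl⟩ := hx
    have hu : u ∈ Submodule.span ℝ ({u, v} : Set (Fin n → ℝ)) :=
      Submodule.subset_span (by simp)
    have hv : v ∈ Submodule.span ℝ ({u, v} : Set (Fin n → ℝ)) :=
      Submodule.subset_span (by simp)
    have : (s1 • u + t1 • v) -ᵥ (s2 • u + t2 • v) = (s1 - s2) • u + (t1 - t2) • v := by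
      simp [vsub_eq_sub, sub_smul]; abel
    rw [this]
    exact Submodule.add_mem _ (Submodule.smul_mem _ _ hu) (Submodule.smul_mem _ _ hv)
  · rw [Submodule.span_le]
    have h0 : (0 : Fin n → ℝ) ∈ cone2 u v := ⟨0, 0, le_refl _, le_refl _, by simp⟩
    rintro x (rfl | rfl)
    · have hu : x ∈ cone2 x v := ⟨1, 0, zero_le_one, le_refl _, by simp⟩
      have := vsub_mem_vectorSpan ℝ hu h0
      simpa using this
    · have hv : x ∈ cone2 u x := ⟨0, 1, le_refl _, zero_le_one, by simp⟩
      have := vsub_mem_vectorSpan ℝ hv h0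
      simpa using this

lemma polyDim_cone2 {n : ℕ} {u v : Fin n → ℝ} (h : LinearIndependent ℝ ![u, v]) :
    polyDim (cone2 u v) = 2 := by
  unfold polyDim
  rw [vectorSpan_cone2]
  have hr : ({u, v} : Set (Fin n → ℝ)) = Set.range ![u, v] := by
    ext x
    simp [Fin.exists_fin_two]
    tauto
  rw [hr, finrank_span_eq_card h]
  simp

lemma li_12 : LinearIndependent ℝ ![![(1:ℝ),0,0,0,0], ![0,1,0,0,0]] := by
  rw [LinearIndependent.pair_iff]
  intro s t h
  constructor
  · simpa using congrFun h 0
  · simpa using congrFun h 1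

lemma li_23 : LinearIndependent ℝ ![![(0:ℝ),1,0,0,0], ![0,0,1,0,0]] := by
  rw [LinearIndependent.pair_iff]
  intro s t h
  constructor
  · simpa using congrFun h 1
  · simpa using congrFun h 2

lemma li_45 : LinearIndependent ℝ ![![(0:ℝ),0,0,1,0], ![0,0,0,0,1]] := by
  rw [LinearIndependent.pair_iff]
  intro s t h
  constructor
  · simpa using congrFun h 3
  · simpa using congrFun h 4

/-- Every face of `twoPlanesFan` either lies in `{x | x 3 = 0 ∧ x 4 = 0}` or meets
that subspace only in the ray through `e₁`. -/
lemma twoPlanesFan_dichotomy (F : Set (Fin 5 → ℝ)) (hF : F ∈ twoPlanesFan) :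
    (∀ x ∈ F, x 3 = 0 ∧ x 4 = 0) ∨
    (∀ x ∈ F, x 3 = 0 → x 4 = 0 → x ∈ ray ![1,0,0,0,0]) := by
  simp only [twoPlanesFan, Set.mem_union, Set.mem_insert_iff, Set.mem_singleton_iff] at hF
  rcases hF with ((rfl | rfl | rfl | rfl | rfl | rfl | rfl | rfl) |
      (rfl | rfl | rfl | rfl | rfl | rfl | rfl | rfl | rfl | rfl | rfl | rfl))
  -- {0}
  · left; rintro x rfl; simp
  -- ray e1
  · left; rintro x ⟨t, _, rfl⟩; simp
  -- ray e2
  · left; rintro x ⟨t, _, rfl⟩; simp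
  -- ray e3
  · left; rintro x ⟨t, _, rfl⟩; simp
  -- ray (-1,-1,-1,0,0)
  · left; rintro x ⟨t, _, rfl⟩; simp
  -- ray e4
  · right; rintro x ⟨t, ht, rfl⟩ h3 _
    simp only [Pi.smul_apply, smul_eq_mul] at h3
    norm_num [Matrix.cons_val_two, Matrix.cons_val_three, Matrix.cons_val_four] at h3
    exact ⟨0, le_refl 0, by simp [h3]⟩
  -- ray e5
  · right; rintro x ⟨t, ht, rfl⟩ _ h4
    simp only [Pi.smul_apply, smul_eq_mul] at h4
    norm_num [Matrix.cons_val_two, Matrix.cons_val_three, Matrix.cons_val_four] at h4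
    exact ⟨0, le_refl 0, by simp [h4]⟩
  -- ray (-1,0,0,-1,-1)
  · right; rintro x ⟨t, ht, rfl⟩ h3 _
    simp only [Pi.smul_apply, smul_eq_mul] at h3
    norm_num [Matrix.cons_val_two, Matrix.cons_val_three, Matrix.cons_val_four] at h3
    exact ⟨0, le_refl 0, by simp [h3]⟩
  -- plane-1 cones
  · left; rintro x ⟨s, t, _, _, rfl⟩; simp
  · left; rintro x ⟨s, t, _, _, rfl⟩; simp
  · left; rintro x ⟨s, t, _, _, rfl⟩; simp
  · left; rintro x ⟨s, t, _, _, rfl⟩; simp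
  · left; rintro x ⟨s, t, _, _, rfl⟩; simp
  · left; rintro x ⟨s, t, _, _, rfl⟩; simp
  -- cone2 e1 e4
  · right; rintro x ⟨s, t, hs, ht, rfl⟩ h3 _
    simp only [Pi.add_apply, Pi.smul_apply, smul_eq_mul] at h3
    norm_num [Matrix.cons_val_two, Matrix.cons_val_three, Matrix.cons_val_four] at h3
    exact ⟨s, hs, by simp [h3]⟩
  -- cone2 e1 e5
  · right; rintro x ⟨s, t, hs, ht, rfl⟩ _ h4
    simp only [Pi.add_apply, Pi.smul_apply, smul_eq_mul] at h4
    norm_num [Matrix.cons_val_two, Matrix.cons_val_three, Matrix.cons_val_four] at h4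
    exact ⟨s, hs, by simp [h4]⟩
  -- cone2 e1 (-1,0,0,-1,-1)
  · right; rintro x ⟨s, t, hs, ht, rfl⟩ h3 _
    simp only [Pi.add_apply, Pi.smul_apply, smul_eq_mul] at h3
    norm_num [Matrix.cons_val_two, Matrix.cons_val_three, Matrix.cons_val_four] at h3
    exact ⟨s, hs, by simp [h3]⟩
  -- cone2 e4 e5
  · right; rintro x ⟨s, t, hs, ht, rfl⟩ h3 h4
    simp only [Pi.add_apply, Pi.smul_apply, smul_eq_mul] at h3 h4
    norm_num [Matrix.cons_val_two, Matrix.cons_val_three, Matrix.cons_val_four] at h3 h4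
    exact ⟨0, le_refl 0, by simp [h3, h4]⟩
  -- cone2 e4 (-1,0,0,-1,-1)
  · right; rintro x ⟨s, t, hs, ht, rfl⟩ h3 h4
    simp only [Pi.add_apply, Pi.smul_apply, smul_eq_mul] at h3 h4
    norm_num [Matrix.cons_val_two, Matrix.cons_val_three, Matrix.cons_val_four] at h3 h4
    have hs0 : s = 0 := by linarith
    exact ⟨0, le_refl 0, by simp [hs0, h4]⟩
  -- cone2 e5 (-1,0,0,-1,-1)
  · right; rintro x ⟨s, t, hs, ht, rfl⟩ h3 h4
    simp only [Pi.add_apply, Pi.smul_apply, smul_eq_mul] at h3 h4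
    norm_num [Matrix.cons_val_two, Matrix.cons_val_three, Matrix.cons_val_four] at h3 h4
    have hs0 : s = 0 := by linarith
    exact ⟨0, le_refl 0, by simp [hs0, h3]⟩

lemma ray_e1_subset : ray ![(1:ℝ),0,0,0,0] ⊆ cone2 ![(1:ℝ),0,0,0,0] ![0,1,0,0,0] := by
  rintro x ⟨t, ht, rfl⟩
  exact ⟨t, 0, ht, le_refl 0, by simp⟩

end Aux

/-- Example 1.4: the union of two standard tropical planes in `ℝ^5`
glued along the ray through `e₁` is not 2-connected through codimension one:
removing a single closed facet containing that ray disconnects the facet-ridge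
graph. -/
theorem two_planes_fan_not_two_connected
    (C : PolyhedralComplex 5) (hC : C.faces = twoPlanesFan) :
    ¬ C.ConnectedThroughCodimOne 2 2 := by
  intro hcon
  set F0 : Set (Fin 5 → ℝ) := cone2 ![1,0,0,0,0] ![0,1,0,0,0] with hF0
  set P : Set (Fin 5 → ℝ) := cone2 ![0,1,0,0,0] ![0,0,1,0,0] with hP
  set Q : Set (Fin 5 → ℝ) := cone2 ![0,0,0,1,0] ![0,0,0,0,1] with hQ
  have hF0mem : F0 ∈ C.faces := by rw [hC]; simp [twoPlanesFan, hF0]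
  have hPmem : P ∈ C.faces := by rw [hC]; simp [twoPlanesFan, hP]
  have hQmem : Q ∈ C.faces := by rw [hC]; simp [twoPlanesFan, hQ]
  have hF0facet : F0 ∈ C.facets 2 := ⟨hF0mem, polyDim_cone2 li_12⟩
  have hPfacet : P ∈ C.facets 2 := ⟨hPmem, polyDim_cone2 li_23⟩
  have hQfacet : Q ∈ C.facets 2 := ⟨hQmem, polyDim_cone2 li_45⟩
  have hPne : P ≠ F0 := by
    intro h
    have : (![0,0,1,0,0] : Fin 5 → ℝ) ∈ F0 := by
      rw [← h, hP]; exact ⟨0, 1, le_refl 0, zero_le_one, by simp⟩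
    obtain ⟨s, t, _, _, heq⟩ := this
    have := congrFun heq 2
    norm_num [Matrix.cons_val_two, Matrix.cons_val_three, Matrix.cons_val_four] at this
  have hQne : Q ≠ F0 := by
    intro h
    have : (![0,0,0,1,0] : Fin 5 → ℝ) ∈ F0 := by
      rw [← h, hQ]; exact ⟨1, 0, zero_le_one, le_refl 0, by simp⟩
    obtain ⟨s, t, _, _, heq⟩ := this
    have := congrFun heq 3
    norm_num [Matrix.cons_val_two, Matrix.cons_val_three, Matrix.cons_val_four] at this
  have hrtg := hcon {F0} (by intro x hx; simp at hx; subst hx; exact hF0facet)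
    (by simp) P hPfacet Q hQfacet (by simp [hPne]) (by simp [hQne])
  -- the invariant: lying in the subspace x 3 = x 4 = 0
  have step : ∀ A B : Set (Fin 5 → ℝ), C.Adj 2 {F0} A B →
      (∀ x ∈ A, x 3 = 0 ∧ x 4 = 0) → ∀ x ∈ B, x 3 = 0 ∧ x 4 = 0 := by
    rintro A B ⟨hA, hB, _, _, R, hR, hRA, hRB, hRG⟩ hInv
    rcases twoPlanesFan_dichotomy B (by rw [← hC]; exact hB.1) with h | h
    · exact h
    · exfalso
      apply hRG F0 (by simp)
      intro y hy
      apply ray_e1_subset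
      exact h y (hRB hy) (hInv y (hRA hy)).1 (hInv y (hRA hy)).2
  have hInvP : ∀ x ∈ P, x 3 = 0 ∧ x 4 = 0 := by
    rintro x ⟨s, t, _, _, rfl⟩; rw [hP] at *; constructor <;> simp
  have chain : ∀ B, Relation.ReflTransGen (C.Adj 2 {F0}) P B →
      ∀ x ∈ B, x 3 = 0 ∧ x 4 = 0 := by
    intro B h
    induction h with
    | refl => exact hInvP
    | tail _ hadj ih => exact step _ _ hadj ih
  have hInvQ := chain Q hrtg
  have : (![0,0,0,1,0] : Fin 5 → ℝ) ∈ Q := ⟨1, 0, zero_le_one, le_refl 0, by simp⟩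
  have := (hInvQ _ this).1
  norm_num [Matrix.cons_val_two, Matrix.cons_val_three, Matrix.cons_val_four] at this
end

section
/- For a loopless matroid M and an element i of the ground set, the set of flats of M containing i is in natural inclusion-preserving bijection with the flats of the contraction M/i; consequently, the star of the Bergman fan of M (fine subdivision) at the ray of the rank-one flat containing i is the Bergman fan of M/i with its fine subdivision. -/
lemma aux_flat_closure {α : Type*} (M : Matroid α) (X : Set α) : M.IsFlat (M.closure X) := by
  rw [Matroid.closure_def, Set.sInter_eq_iInter]
  have : Nonempty {F : Set α // F ∈ {F | M.IsFlat F ∧ X ∩ M.E ⊆ F}} :=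
    ⟨⟨M.E, M.ground_isFlat, Set.inter_subset_right⟩⟩
  exact Matroid.IsFlat.iInter fun F ↦ F.2.1

lemma aux_flat_of_closure_eq {α : Type*} {M : Matroid α} {F : Set α}
    (h : M.closure F = F) : M.IsFlat F := h ▸ aux_flat_closure M F

/-- for a loopless matroid `M` and an element `i` of its ground set,
the map `F ↦ F \ {i}` is an inclusion-preserving bijection from the flats of `M`
containing `i` onto the flats of the contraction `M/i` (characterized here by its
ground set `M.E \ {i}` and its closure operator `X ↦ cl_M(X ∪ {i}) \ {i}`). -/
theorem flats_containing_biject_contraction_flats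
    {α : Type*} (M N : Matroid α) (i : α) (hi : i ∈ M.E)
    (hloopless : M.closure ∅ = ∅)
    (hNE : N.E = M.E \ {i})
    (hNcl : ∀ X ⊆ M.E \ {i}, N.closure X = M.closure (insert i X) \ {i}) :
    Set.BijOn (fun F => F \ {i}) {F | M.IsFlat F ∧ i ∈ F} {G | N.IsFlat G} ∧
    (∀ F F' : Set α, M.IsFlat F → i ∈ F → M.IsFlat F' → i ∈ F' →
      (F ⊆ F' ↔ F \ {i} ⊆ F' \ {i})) := by
  constructor
  · refine ⟨?_, ?_, ?_⟩
    · rintro F ⟨hF, hiF⟩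
      have hsub : F \ {i} ⊆ M.E \ {i} := Set.diff_subset_diff_left hF.subset_ground
      have h1 : N.closure (F \ {i}) = F \ {i} := by
        rw [hNcl _ hsub, Set.insert_diff_singleton, Set.insert_eq_of_mem hiF, hF.closure]
      exact aux_flat_of_closure_eq h1
    · rintro F ⟨hF, hiF⟩ F' ⟨hF', hiF'⟩ (h : F \ {i} = F' \ {i})
      have : insert i (F \ {i}) = insert i (F' \ {i}) := by rw [h]
      rwa [Set.insert_diff_singleton, Set.insert_eq_of_mem hiF,
        Set.insert_diff_singleton, Set.insert_eq_of_mem hiF'] at this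
    · rintro G (hG : N.IsFlat G)
      have hGE : G ⊆ M.E \ {i} := hNE ▸ hG.subset_ground
      have hiG : i ∉ G := fun h => (hGE h).2 rfl
      refine ⟨insert i G, ⟨?_, Set.mem_insert _ _⟩, ?_⟩
      · have hFE : insert i G ⊆ M.E :=
          Set.insert_subset hi (hGE.trans Set.diff_subset)
        have h1 : M.closure (insert i G) \ {i} = G := by
          rw [← hNcl G hGE, hG.closure]
        have hicl : i ∈ M.closure (insert i G) :=
          M.subset_closure _ hFE (Set.mem_insert _ _)
        refine aux_flat_of_closure_eq ?_
        have : insert i (M.closure (insert i G) \ {i}) = insert i G := by rw [h1]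
        rwa [Set.insert_diff_singleton, Set.insert_eq_of_mem hicl] at this
      · simp [Set.insert_diff_self_of_notMem hiG]
  · intro F F' hF hiF hF' hiF'
    constructor
    · exact fun h => Set.diff_subset_diff_left h
    · intro h x hx
      rcases eq_or_ne x i with rfl | hne
      · exact hiF'
      · exact (h ⟨hx, hne⟩).1
end
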